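/- For any functions f, g, h : V → ℂ on the vertices of a square, 2·Tr(ρ(f)[F,ρ(g)][F,ρ(h)]M) = f(0)(g_{0,1}h_{1,2} - g_{0,3}h_{3,2}) + f(2)(g_{2,3}h_{3,0} - g_{2,1}h_{1,0}) - f(1)(g_{1,0}h_{0,3} - g_{1,2}h_{2,3}) - f(3)(g_{3,2}h_{2,1} - g_{3,0}h_{0,1}), where a_{i,j} := a(j) - a(i). -/
import Mathlib

open Matrix

noncomputable def Fop : Matrix (Fin 4) (Fin 4) ℂ :=
  ((Real.sqrt 2 : ℝ) : ℂ)⁻¹ • !![0,0,1,1; 0,0,-1,1; 1,-1,0,0; 1,1,0,0]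

/-- Multiplication operator: diagonal of vertex values, ordered v₀, v₂, v₁, v₃. -/
def rho (f : Fin 4 → ℂ) : Matrix (Fin 4) (Fin 4) ℂ :=
  !![f 0, 0, 0, 0; 0, f 2, 0, 0; 0, 0, f 1, 0; 0, 0, 0, f 3]

def Mmat : Matrix (Fin 4) (Fin 4) ℂ :=
  !![0,1,0,0; -1,0,0,0; 0,0,0,1; 0,0,-1,0]

set_option maxHeartbeats 2000000 in
theorem stmt3 (f g h : Fin 4 → ℂ) :
    2 * (rho f * (Fop * rho g - rho g * Fop) * (Fop * rho h - rho h * Fop) * Mmat).trace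
    = f 0 * ((g 1 - g 0) * (h 2 - h 1) - (g 3 - g 0) * (h 2 - h 3))
      + f 2 * ((g 3 - g 2) * (h 0 - h 3) - (g 1 - g 2) * (h 0 - h 1))
      - f 1 * ((g 0 - g 1) * (h 3 - h 0) - (g 2 - g 1) * (h 3 - h 2))
      - f 3 * ((g 2 - g 3) * (h 1 - h 2) - (g 0 - g 3) * (h 1 - h 0)) := by
  have hs : (((Real.sqrt 2 : ℝ) : ℂ)⁻¹) * (((Real.sqrt 2 : ℝ) : ℂ)⁻¹) = 2⁻¹ := by
    rw [← mul_inv, ← Complex.ofReal_mul,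
      Real.mul_self_sqrt (by norm_num : (0:ℝ) ≤ 2)]
    norm_num
  simp only [Fop, rho, Mmat, Matrix.trace, Matrix.diag, Fin.sum_univ_four, Matrix.smul_mul, Matrix.mul_smul,
    Matrix.sub_mul, Matrix.mul_sub, smul_sub]
  simp [Matrix.mul_apply, Fin.sum_univ_four, Matrix.smul_apply, smul_eq_mul]
  ring_nf
  rw [show ((Real.sqrt 2 : ℝ) : ℂ)⁻¹ ^ 2 = 2⁻¹ by rw [sq, hs]]
  ring
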